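/- For every integer k ≥ 2 and every integer m with 1 ≤ m ≤ k, det A^{(k−1)}_{k,m} = (−1)^{k+m} · (1/((m−1)!)²) · (1/(k−m)!) · det A^{(k−1)}. -/

import Mathlib

open Matrix

open fwdDiff in
/-- `ff i j = (i+j)! / j!` as a real number. -/
noncomputable def ff (i j : ℕ) : ℝ := ((i + j).factorial : ℝ) / (j.factorial : ℝ)

open fwdDiff

lemma fwdDiff_ff (i : ℕ) :
    fwdDiff (1:ℕ) (ff i) = fun j => (i : ℝ) * ff (i - 1) (j + 1) := by
  funext j
  cases i with
  | zero =>
    have h1 : ((j + 1).factorial : ℝ) ≠ 0 := Nat.cast_ne_zero.mpr (j + 1).factorial_ne_zero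
    have h2 : (j.factorial : ℝ) ≠ 0 := Nat.cast_ne_zero.mpr j.factorial_ne_zero
    simp only [fwdDiff, ff, Nat.zero_add, Nat.zero_sub, Nat.cast_zero, zero_mul]
    rw [div_self h1, div_self h2, sub_self]
  | succ i' =>
    simp only [fwdDiff, ff]
    have h1 : i' + 1 + (j + 1) = (i' + 1 + j) + 1 := by omega
    have h2 : i' + 1 - 1 + (j + 1) = i' + 1 + j := by omega
    rw [h1, h2, Nat.factorial_succ (i' + 1 + j), Nat.factorial_succ j]
    have hj : (j.factorial : ℝ) ≠ 0 := Nat.cast_ne_zero.mpr j.factorial_ne_zero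
    have hj1 : ((j + 1 : ℕ) : ℝ) ≠ 0 := by positivity
    field_simp
    push_cast
    ring

lemma fwdDiff_iter_shift (g : ℕ → ℝ) (n x : ℕ) :
    (fwdDiff 1)^[n] (fun j => g (j + 1)) x = (fwdDiff 1)^[n] g (x + 1) := by
  induction n generalizing g x with
  | zero => rfl
  | succ n ih =>
    rw [Function.iterate_succ_apply, Function.iterate_succ_apply]
    have : fwdDiff (1:ℕ) (fun j => g (j + 1)) = fun j => (fwdDiff (1:ℕ) g) (j + 1) := by
      funext j; simp [fwdDiff]
    rw [this, ih]

lemma fwdDiff_iter_mul (c : ℝ) (g : ℕ → ℝ) (n x : ℕ) :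
    (fwdDiff 1)^[n] (fun j => c * g j) x = c * (fwdDiff 1)^[n] g x := by
  induction n generalizing g x with
  | zero => rfl
  | succ n ih =>
    rw [Function.iterate_succ_apply, Function.iterate_succ_apply]
    have : fwdDiff (1:ℕ) (fun j => c * g j) = fun j => c * (fwdDiff (1:ℕ) g) j := by
      funext j; simp [fwdDiff]; ring
    rw [this, ih]

lemma fwdDiff_iter_ff (n : ℕ) : ∀ (i x : ℕ),
    (fwdDiff 1)^[n] (ff i) x = (i.descFactorial n : ℝ) * ff (i - n) (x + n) := by
  induction n with
  | zero => intro i x; simp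
  | succ n ih =>
    intro i x
    rw [Function.iterate_succ_apply, fwdDiff_ff]
    have : (fun j => (i : ℝ) * ff (i - 1) (j + 1))
        = fun j => (i : ℝ) * (fun t => ff (i - 1) (t + 1)) j := rfl
    rw [this, fwdDiff_iter_mul, fwdDiff_iter_shift, ih]
    have h1 : i - 1 - n = i - (n + 1) := by omega
    have h2 : x + 1 + n = x + (n + 1) := by omega
    have h3 : (i.descFactorial (n + 1) : ℝ)
        = (i : ℝ) * ((i - 1).descFactorial n : ℝ) := by
      cases i with
      | zero => simp
      | succ i' =>
        rw [Nat.succ_descFactorial_succ]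
        push_cast
        simp
    rw [h1, h2, h3]
    ring

/-- The key alternating-sum identity. -/
lemma key_sum (n i : ℕ) :
    ∑ j ∈ Finset.range (n + 2), ((-1 : ℝ) ^ (n + 1 - j) * ((n + 1).choose j) * ff i j)
      = (i.descFactorial (n + 1) : ℝ) * ff (i - (n + 1)) (n + 1) := by
  have h := fwdDiff_iter_eq_sum_shift (1 : ℕ) (ff i) (n + 1) 0
  rw [fwdDiff_iter_ff, Nat.zero_add] at h
  rw [h]
  apply Finset.sum_congr rfl
  intro j hj
  have : (0 : ℕ) + j • (1 : ℕ) = j := by simp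
  rw [this, zsmul_eq_mul]
  push_cast
  ring

lemma key_entry (n : ℕ) (i : Fin (n + 2)) :
    ∑ j : Fin (n + 2), ((-1 : ℝ) ^ (i.1 + j.1) * ((i.1 + j.1).factorial : ℝ)
        * (1 / (((j.1.factorial : ℝ)) ^ 2 * (((n + 1 - j.1).factorial : ℝ)))))
      = if i = Fin.last (n + 1) then 1 else 0 := by
  have hfact : ∀ j : ℕ, j ≤ n + 1 →
      (1 : ℝ) / ((j.factorial : ℝ) * ((n + 1 - j).factorial : ℝ))
        = ((n + 1).choose j : ℝ) / ((n + 1).factorial : ℝ) := by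
    intro j hj
    have h := Nat.choose_mul_factorial_mul_factorial hj
    have hj0 : (j.factorial : ℝ) ≠ 0 := Nat.cast_ne_zero.mpr j.factorial_ne_zero
    have hj1 : ((n + 1 - j).factorial : ℝ) ≠ 0 :=
      Nat.cast_ne_zero.mpr (n + 1 - j).factorial_ne_zero
    have hn : ((n + 1).factorial : ℝ) ≠ 0 :=
      Nat.cast_ne_zero.mpr (n + 1).factorial_ne_zero
    have hcast : (((n + 1).choose j : ℝ)) * (j.factorial : ℝ) * ((n + 1 - j).factorial : ℝ)
        = ((n + 1).factorial : ℝ) := by exact_mod_cast h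
    field_simp
    linarith [hcast]
  -- rewrite each term
  have hterm : ∀ j : Fin (n + 2),
      (-1 : ℝ) ^ (i.1 + j.1) * ((i.1 + j.1).factorial : ℝ)
        * (1 / (((j.1.factorial : ℝ)) ^ 2 * (((n + 1 - j.1).factorial : ℝ))))
      = ((-1 : ℝ) ^ (i.1 + n + 1) / ((n + 1).factorial : ℝ))
          * ((-1 : ℝ) ^ (n + 1 - j.1) * ((n + 1).choose j.1 : ℝ) * ff i.1 j.1) := by
    intro j
    have hjle : j.1 ≤ n + 1 := by omega
    have hfac : ((i.1 + j.1).factorial : ℝ) = ff i.1 j.1 * (j.1.factorial : ℝ) := by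
      have hj0 : (j.1.factorial : ℝ) ≠ 0 := Nat.cast_ne_zero.mpr j.1.factorial_ne_zero
      rw [ff]; field_simp
    have hsign : (-1 : ℝ) ^ (i.1 + j.1)
        = (-1 : ℝ) ^ (i.1 + n + 1) * (-1 : ℝ) ^ (n + 1 - j.1) := by
      have h2 : i.1 + n + 1 + (n + 1 - j.1) = (i.1 + j.1) + 2 * (n + 1 - j.1) := by omega
      calc (-1 : ℝ) ^ (i.1 + j.1)
          = (-1 : ℝ) ^ (i.1 + j.1) * ((-1 : ℝ) ^ 2) ^ (n + 1 - j.1) := by norm_num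
        _ = (-1 : ℝ) ^ (i.1 + j.1 + 2 * (n + 1 - j.1)) := by
            rw [← pow_mul, ← pow_add]
        _ = (-1 : ℝ) ^ (i.1 + n + 1) * (-1 : ℝ) ^ (n + 1 - j.1) := by
            rw [← h2, pow_add]
    rw [hfac, hsign]
    have := hfact j.1 hjle
    have hexp : (1 : ℝ) / (((j.1.factorial : ℝ)) ^ 2 * (((n + 1 - j.1).factorial : ℝ)))
        = (1 / (j.1.factorial : ℝ)) *
          ((1 : ℝ) / ((j.1.factorial : ℝ) * ((n + 1 - j.1).factorial : ℝ))) := by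
      ring
    rw [hexp, this, ff]
    have hj0 : (j.1.factorial : ℝ) ≠ 0 := Nat.cast_ne_zero.mpr j.1.factorial_ne_zero
    field_simp
  rw [Finset.sum_congr rfl (fun j _ => hterm j), ← Finset.mul_sum]
  rw [Fin.sum_univ_eq_sum_range
    (fun j => (-1 : ℝ) ^ (n + 1 - j) * ((n + 1).choose j : ℝ) * ff i.1 j)]
  rw [key_sum]
  by_cases hi : i = Fin.last (n + 1)
  · subst hi
    simp only [Fin.val_last, if_pos rfl, if_true]
    rw [Nat.descFactorial_self, Nat.sub_self]
    have hff : ff 0 (n + 1) = 1 := by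
      rw [ff]
      simp [div_self (Nat.cast_ne_zero.mpr (n + 1).factorial_ne_zero : ((n+1).factorial : ℝ) ≠ 0)]
    rw [hff]
    have hsign : (-1 : ℝ) ^ (n + 1 + n + 1) = 1 := by
      have : n + 1 + n + 1 = 2 * (n + 1) := by omega
      rw [this, pow_mul]; norm_num
    rw [hsign]
    field_simp
  · have hlt : i.1 < n + 1 := by
      have := i.isLt
      rcases Nat.lt_or_ge i.1 (n + 1) with h | h
      · exact h
      · exfalso; apply hi; apply Fin.ext; simp only [Fin.val_last]; omega
    rw [Nat.descFactorial_eq_zero_iff_lt.mpr hlt]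
    simp [hi]

/-- For `k = n + 2 ≥ 2` (rows/columns indexed `1, …, k` in the paper,
`0, …, k-1` here, so the `(i,j)` entry is `(-1)^{i+j} (i+j)!`) and `1 ≤ m ≤ k`:
`det A^{(k-1)}_{k,m} = (-1)^{k+m} (1/((m-1)!)²) (1/(k-m)!) det A^{(k-1)}`,
where `A^{(k-1)}_{k,m}` deletes the `k`-th (last) row and the `m`-th column. -/
theorem det_minor_last_row
    (n : ℕ) (m : ℕ) (hm1 : 1 ≤ m) (hm2 : m ≤ n + 2) :
    letI A : Matrix (Fin (n + 2)) (Fin (n + 2)) ℝ :=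
      fun i j => (-1 : ℝ) ^ (i.1 + j.1) * ((i.1 + j.1).factorial : ℝ)
    (A.submatrix (Fin.last (n + 1)).succAbove
        (⟨m - 1, by omega⟩ : Fin (n + 2)).succAbove).det
      = (-1 : ℝ) ^ ((n + 2) + m) * (1 / ((m - 1).factorial : ℝ) ^ 2)
          * (1 / (((n + 2) - m).factorial : ℝ)) * A.det := by
  set A : Matrix (Fin (n + 2)) (Fin (n + 2)) ℝ :=
    fun i j => (-1 : ℝ) ^ (i.1 + j.1) * ((i.1 + j.1).factorial : ℝ) with hA
  set x : Fin (n + 2) → ℝ :=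
    fun j => 1 / ((j.1.factorial : ℝ) ^ 2 * ((n + 1 - j.1).factorial : ℝ)) with hx
  set m' : Fin (n + 2) := ⟨m - 1, by omega⟩ with hm'
  -- A *ᵥ x = e_last
  have hAx : A *ᵥ x = Pi.single (Fin.last (n + 1)) 1 := by
    funext i
    show ∑ j : Fin (n + 2), ((-1 : ℝ) ^ (i.1 + j.1) * ((i.1 + j.1).factorial : ℝ)
        * (1 / (((j.1.factorial : ℝ)) ^ 2 * (((n + 1 - j.1).factorial : ℝ))))) = _
    rw [Pi.single_apply]
    exact key_entry n i
  -- adjugate column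
  have hadj : adjugate A m' (Fin.last (n + 1)) = A.det * x m' := by
    have h1 : adjugate A *ᵥ (A *ᵥ x) = A.det • x := by
      rw [mulVec_mulVec, adjugate_mul, smul_mulVec, one_mulVec]
    rw [hAx, mulVec_single] at h1
    have := congrFun h1 m'
    simpa using this
  have hcof := adjugate_fin_succ_eq_det_submatrix A m' (Fin.last (n + 1))
  have hminor : (A.submatrix (Fin.last (n + 1)).succAbove m'.succAbove).det
      = (-1 : ℝ) ^ ((Fin.last (n + 1)).1 + m'.1) * adjugate A m' (Fin.last (n + 1)) := by
    rw [hcof, ← mul_assoc, ← pow_add]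
    have : (Fin.last (n + 1)).1 + m'.1 + ((Fin.last (n + 1)).1 + m'.1)
        = 2 * ((Fin.last (n + 1)).1 + m'.1) := by ring
    rw [this, pow_mul]
    norm_num
  rw [hminor, hadj]
  have hval : m'.1 = m - 1 := rfl
  have hxval : x m' = 1 / ((m - 1).factorial : ℝ) ^ 2 * (1 / (((n + 2) - m).factorial : ℝ)) := by
    rw [hx]
    simp only [hval]
    have : n + 1 - (m - 1) = n + 2 - m := by omega
    rw [this]
    ring
  have hsign : (-1 : ℝ) ^ ((Fin.last (n + 1)).1 + m'.1) = (-1 : ℝ) ^ ((n + 2) + m) := by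
    have h1 : (Fin.last (n + 1)).1 + m'.1 = n + 1 + (m - 1) := by
      simp only [Fin.val_last, hval]
    have h2 : n + 2 + m = (n + 1 + (m - 1)) + 2 := by omega
    rw [h1, h2, pow_add (-1 : ℝ) (n + 1 + (m - 1)) 2]
    norm_num
  rw [hsign, hxval]
  ring
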